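/- arXiv:2209.08050 — 4 statements merged into one kernel-verified Lean document; each statement's English description precedes it below -/
import Mathlib

section
/- Let 0 < ε < 1/2 and let ω > 0 satisfy tan(ω · ln((1−ε)/ε)) = −2ω. Set λ = ω² + 1/4 and f(t) = (t(1−t))^{−1/2} sin(ω · ln(t/(1−t))) for t ∈ [ε, 1−ε]. Then f satisfies the integral eigenvalue equation f(t) = λ ∫_ε^{1−ε} ((min(s,t) − st) / (s(1−s) t(1−t))) f(s) ds for every t ∈ [ε, 1−ε]. -/
open MeasureTheory intervalIntegral

noncomputable def G1 (ω x : ℝ) : ℝ :=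
  Real.exp ((Real.log x - Real.log (1 - x)) / 2) *
    ((1/2) * Real.sin (ω * (Real.log x - Real.log (1 - x)))
      - ω * Real.cos (ω * (Real.log x - Real.log (1 - x)))) / (ω ^ 2 + 1/4)

noncomputable def G2 (ω x : ℝ) : ℝ :=
  Real.exp ((Real.log (1 - x) - Real.log x) / 2) *
    (-(1/2) * Real.sin (ω * (Real.log x - Real.log (1 - x)))
      - ω * Real.cos (ω * (Real.log x - Real.log (1 - x)))) / (ω ^ 2 + 1/4)

lemma exp_half_log {a : ℝ} (ha : 0 < a) : Real.exp (Real.log a / 2) = Real.sqrt a := by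
  rw [Real.sqrt_eq_rpow, Real.rpow_def_of_pos ha]
  ring_nf

lemma exp_half_sub {s : ℝ} (h0 : 0 < s) (h1 : s < 1) :
    Real.exp ((Real.log s - Real.log (1 - s)) / 2) = Real.sqrt s / Real.sqrt (1 - s) := by
  rw [sub_div, Real.exp_sub, exp_half_log h0, exp_half_log (by linarith : (0:ℝ) < 1 - s)]

lemma hasDerivAt_L {s : ℝ} (h0 : 0 < s) (h1 : s < 1) :
    HasDerivAt (fun x : ℝ => Real.log x - Real.log (1 - x)) (1 / (s * (1 - s))) s := by
  have h1s : (1:ℝ) - s ≠ 0 := by linarith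
  have d2 : HasDerivAt (fun x : ℝ => Real.log (1 - x)) ((1 - s)⁻¹ * (-1)) s :=
    (Real.hasDerivAt_log h1s).comp s ((hasDerivAt_id s).const_sub 1)
  have := (Real.hasDerivAt_log h0.ne').sub d2
  refine this.congr_deriv ?_
  field_simp
  ring

lemma hasDerivAt_G1 (ω : ℝ) (hω : 0 < ω) {s : ℝ} (h0 : 0 < s) (h1 : s < 1) :
    HasDerivAt (G1 ω)
      (Real.sin (ω * Real.log (s / (1 - s))) / ((1 - s) * Real.sqrt (s * (1 - s)))) s := by
  have h1s : (0:ℝ) < 1 - s := by linarith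
  have hL := hasDerivAt_L h0 h1
  have hE : HasDerivAt (fun x : ℝ => Real.exp ((Real.log x - Real.log (1 - x)) / 2))
      (Real.exp ((Real.log s - Real.log (1 - s)) / 2) * (1 / (s * (1 - s)) / 2)) s :=
    (hL.div_const 2).exp
  have hS : HasDerivAt (fun x : ℝ => Real.sin (ω * (Real.log x - Real.log (1 - x))))
      (Real.cos (ω * (Real.log s - Real.log (1 - s))) * (ω * (1 / (s * (1 - s))))) s :=
    (hL.const_mul ω).sin
  have hC : HasDerivAt (fun x : ℝ => Real.cos (ω * (Real.log x - Real.log (1 - x))))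
      (-Real.sin (ω * (Real.log s - Real.log (1 - s))) * (ω * (1 / (s * (1 - s))))) s :=
    (hL.const_mul ω).cos
  have hD := (hE.mul ((hS.const_mul (1/2:ℝ)).sub (hC.const_mul ω))).div_const (ω ^ 2 + 1/4)
  refine hD.congr_deriv ?_
  symm
  simp only [Pi.sub_apply]
  rw [Real.log_div h0.ne' h1s.ne', exp_half_sub h0 h1, Real.sqrt_mul h0.le]
  have hsne : Real.sqrt s ≠ 0 := by positivity
  have h1sne : Real.sqrt (1 - s) ≠ 0 := by positivity
  have hc : (ω:ℝ) ^ 2 + 1/4 ≠ 0 := by positivity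
  set S := Real.sin (ω * (Real.log s - Real.log (1 - s)))
  set C := Real.cos (ω * (Real.log s - Real.log (1 - s)))
  field_simp
  ring_nf
  rw [Real.sq_sqrt h0.le]
  ring

lemma hasDerivAt_L2 {s : ℝ} (h0 : 0 < s) (h1 : s < 1) :
    HasDerivAt (fun x : ℝ => Real.log (1 - x) - Real.log x) (-(1 / (s * (1 - s)))) s := by
  have := (hasDerivAt_L h0 h1).neg
  refine HasDerivAt.congr_of_eventuallyEq this (Filter.Eventually.of_forall fun x => ?_)
  simp only [Pi.neg_apply]
  ring

lemma hasDerivAt_G2 (ω : ℝ) (hω : 0 < ω) {s : ℝ} (h0 : 0 < s) (h1 : s < 1) :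
    HasDerivAt (G2 ω)
      (Real.sin (ω * Real.log (s / (1 - s))) / (s * Real.sqrt (s * (1 - s)))) s := by
  have h1s : (0:ℝ) < 1 - s := by linarith
  have hL := hasDerivAt_L h0 h1
  have hL2 := hasDerivAt_L2 h0 h1
  have hE : HasDerivAt (fun x : ℝ => Real.exp ((Real.log (1 - x) - Real.log x) / 2))
      (Real.exp ((Real.log (1 - s) - Real.log s) / 2) * (-(1 / (s * (1 - s))) / 2)) s :=
    (hL2.div_const 2).exp
  have hS : HasDerivAt (fun x : ℝ => Real.sin (ω * (Real.log x - Real.log (1 - x))))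
      (Real.cos (ω * (Real.log s - Real.log (1 - s))) * (ω * (1 / (s * (1 - s))))) s :=
    (hL.const_mul ω).sin
  have hC : HasDerivAt (fun x : ℝ => Real.cos (ω * (Real.log x - Real.log (1 - x))))
      (-Real.sin (ω * (Real.log s - Real.log (1 - s))) * (ω * (1 / (s * (1 - s))))) s :=
    (hL.const_mul ω).cos
  have hD := (hE.mul ((hS.const_mul (-(1/2):ℝ)).sub (hC.const_mul ω))).div_const (ω ^ 2 + 1/4)
  refine hD.congr_deriv ?_
  symm
  simp only [Pi.sub_apply]
  have hexp : Real.exp ((Real.log (1 - s) - Real.log s) / 2)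
      = Real.sqrt (1 - s) / Real.sqrt s := by
    rw [sub_div, Real.exp_sub, exp_half_log h0, exp_half_log h1s]
  rw [Real.log_div h0.ne' h1s.ne', hexp, Real.sqrt_mul h0.le]
  have hsne : Real.sqrt s ≠ 0 := by positivity
  have h1sne : Real.sqrt (1 - s) ≠ 0 := by positivity
  have hc : (ω:ℝ) ^ 2 + 1/4 ≠ 0 := by positivity
  set S := Real.sin (ω * (Real.log s - Real.log (1 - s)))
  set C := Real.cos (ω * (Real.log s - Real.log (1 - s)))
  field_simp
  ring_nf
  rw [Real.sq_sqrt h1s.le]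
  ring

lemma contOn_sin (ω ε : ℝ) (hε : 0 < ε) (hε' : ε < 1/2) :
    ContinuousOn (fun s : ℝ => Real.sin (ω * Real.log (s / (1 - s)))) (Set.Icc ε (1 - ε)) := by
  have hdiv : ContinuousOn (fun s : ℝ => s / (1 - s)) (Set.Icc ε (1 - ε)) :=
    continuousOn_id.div (continuous_const.sub continuous_id).continuousOn
      (fun s hs => by
        obtain ⟨h1, h2⟩ := hs
        intro h; rw [sub_eq_zero] at h; linarith)
  have hlog : ContinuousOn (fun s : ℝ => Real.log (s / (1 - s))) (Set.Icc ε (1 - ε)) :=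
    hdiv.log (by
      rintro s ⟨h1, h2⟩
      have ha : 0 < s := by linarith
      have hb : 0 < 1 - s := by linarith
      positivity)
  exact Real.continuous_sin.comp_continuousOn (continuousOn_const.mul hlog)

lemma contOn_sqrt : Continuous (fun s : ℝ => Real.sqrt (s * (1 - s))) :=
  Real.continuous_sqrt.comp (continuous_id.mul (continuous_const.sub continuous_id))

lemma sqrt_pos_on {ε s : ℝ} (hε : 0 < ε) (hε' : ε < 1/2) (hs : s ∈ Set.Icc ε (1 - ε)) :
    0 < Real.sqrt (s * (1 - s)) := by
  obtain ⟨h1, h2⟩ := hs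
  have ha : 0 < s := by linarith
  have hb : 0 < 1 - s := by linarith
  positivity

lemma contOn_g1 (ω ε : ℝ) (hε : 0 < ε) (hε' : ε < 1/2) :
    ContinuousOn (fun s : ℝ =>
      Real.sin (ω * Real.log (s / (1 - s))) / ((1 - s) * Real.sqrt (s * (1 - s))))
      (Set.Icc ε (1 - ε)) := by
  apply (contOn_sin ω ε hε hε').div
    (((continuous_const.sub continuous_id).mul contOn_sqrt).continuousOn)
  intro s hs
  have h2 : 0 < 1 - s := by obtain ⟨a, b⟩ := hs; linarith
  have := sqrt_pos_on hε hε' hs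
  exact mul_ne_zero h2.ne' this.ne'

lemma contOn_g2 (ω ε : ℝ) (hε : 0 < ε) (hε' : ε < 1/2) :
    ContinuousOn (fun s : ℝ =>
      Real.sin (ω * Real.log (s / (1 - s))) / (s * Real.sqrt (s * (1 - s))))
      (Set.Icc ε (1 - ε)) := by
  apply (contOn_sin ω ε hε hε').div ((continuous_id.mul contOn_sqrt).continuousOn)
  · intro s hs
    have h1 : 0 < s := by obtain ⟨a, b⟩ := hs; linarith
    have := sqrt_pos_on hε hε' hs
    exact mul_ne_zero h1.ne' this.ne'

lemma contOn_F (ω ε t : ℝ) (hε : 0 < ε) (hε' : ε < 1/2) (h0t : 0 < t) (ht1 : t < 1) :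
    ContinuousOn (fun s : ℝ =>
      ((min s t - s * t) / (s * (1 - s) * t * (1 - t))) *
        (Real.sin (ω * Real.log (s / (1 - s))) / Real.sqrt (s * (1 - s))))
      (Set.Icc ε (1 - ε)) := by
  apply ContinuousOn.mul
  · apply ContinuousOn.div
    · exact ((continuous_id.min continuous_const).sub
        (continuous_id.mul continuous_const)).continuousOn
    · exact ((((continuous_id.mul (continuous_const.sub continuous_id)).mul
        continuous_const).mul continuous_const)).continuousOn
    · rintro s ⟨h1, h2⟩
      have ha : 0 < s := by linarith
      have hb : 0 < 1 - s := by linarith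
      have hc : 0 < 1 - t := by linarith
      positivity
  · exact (contOn_sin ω ε hε hε').div contOn_sqrt.continuousOn
      (fun s hs => (sqrt_pos_on hε hε' hs).ne')

/-- Let `0 < ε < 1/2` and let `ω > 0` satisfy
`tan(ω ln((1−ε)/ε)) = −2ω`. With `λ = ω² + 1/4` and
`f(t) = (t(1−t))^{−1/2} sin(ω ln(t/(1−t)))`, the function `f` satisfies the integral
eigenvalue equation
`f(t) = λ ∫_ε^{1−ε} ((min(s,t) − st)/(s(1−s)t(1−t))) f(s) ds` on `[ε, 1−ε]`. -/
theorem eigenfunction_sine_type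
    (ε ω : ℝ) (hε : 0 < ε) (hε' : ε < 1 / 2) (hω : 0 < ω)
    (hcond : Real.tan (ω * Real.log ((1 - ε) / ε)) = -(2 * ω)) :
    ∀ t ∈ Set.Icc ε (1 - ε),
      Real.sin (ω * Real.log (t / (1 - t))) / Real.sqrt (t * (1 - t))
        = (ω ^ 2 + 1 / 4) *
            ∫ s in ε..(1 - ε),
              ((min s t - s * t) / (s * (1 - s) * t * (1 - t))) *
                (Real.sin (ω * Real.log (s / (1 - s))) / Real.sqrt (s * (1 - s))) := by
  rintro t ⟨htl, htr⟩
  have h0t : 0 < t := lt_of_lt_of_le hε htl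
  have ht1 : t < 1 := by linarith
  have h1t : 0 < 1 - t := by linarith
  have h1ε : 0 < 1 - ε := by linarith
  have hεne : ε ≠ 0 := hε.ne'
  -- relation from the transcendental condition
  have hA : Real.sin (ω * Real.log ((1 - ε) / ε))
      = -(2 * ω) * Real.cos (ω * Real.log ((1 - ε) / ε)) := by
    by_cases hC0 : Real.cos (ω * Real.log ((1 - ε) / ε)) = 0
    · exfalso
      rw [Real.tan_eq_sin_div_cos, hC0, div_zero] at hcond
      linarith
    · rw [Real.tan_eq_sin_div_cos, div_eq_iff hC0] at hcond
      exact hcond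
  have hlogA : Real.log ((1 - ε) / ε) = Real.log (1 - ε) - Real.log ε :=
    Real.log_div h1ε.ne' hεne
  -- boundary vanishing
  have hG1ε : G1 ω ε = 0 := by
    have harg : ω * (Real.log ε - Real.log (1 - ε))
        = -(ω * Real.log ((1 - ε) / ε)) := by rw [hlogA]; ring
    have key : (1/2) * Real.sin (ω * (Real.log ε - Real.log (1 - ε)))
        - ω * Real.cos (ω * (Real.log ε - Real.log (1 - ε))) = 0 := by
      rw [harg, Real.sin_neg, Real.cos_neg, hA]; ring
    rw [G1, key]
    simp
  have hG2b : G2 ω (1 - ε) = 0 := by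
    have h1 : (1:ℝ) - (1 - ε) = ε := by ring
    have harg : ω * (Real.log (1 - ε) - Real.log (1 - (1 - ε)))
        = ω * Real.log ((1 - ε) / ε) := by rw [hlogA, h1]
    have key : -(1/2) * Real.sin (ω * (Real.log (1 - ε) - Real.log (1 - (1 - ε))))
        - ω * Real.cos (ω * (Real.log (1 - ε) - Real.log (1 - (1 - ε)))) = 0 := by
      rw [harg, hA]; ring
    rw [G2, key]
    simp
  -- integrability of kernel integrand on both pieces
  have hsub1 : Set.uIcc ε t ⊆ Set.Icc ε (1 - ε) := by
    rw [Set.uIcc_of_le htl]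
    exact Set.Icc_subset_Icc le_rfl htr
  have hsub2 : Set.uIcc t (1 - ε) ⊆ Set.Icc ε (1 - ε) := by
    rw [Set.uIcc_of_le htr]
    exact Set.Icc_subset_Icc htl le_rfl
  have hFc := contOn_F ω ε t hε hε' h0t ht1
  have hF1 : IntervalIntegrable (fun s : ℝ =>
      ((min s t - s * t) / (s * (1 - s) * t * (1 - t))) *
        (Real.sin (ω * Real.log (s / (1 - s))) / Real.sqrt (s * (1 - s)))) volume ε t :=
    (hFc.mono hsub1).intervalIntegrable
  have hF2 : IntervalIntegrable (fun s : ℝ =>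
      ((min s t - s * t) / (s * (1 - s) * t * (1 - t))) *
        (Real.sin (ω * Real.log (s / (1 - s))) / Real.sqrt (s * (1 - s)))) volume t (1 - ε) :=
    (hFc.mono hsub2).intervalIntegrable
  -- split the integral
  rw [← intervalIntegral.integral_add_adjacent_intervals hF1 hF2]
  -- rewrite each piece
  have hco1 : (∫ s in ε..t,
      ((min s t - s * t) / (s * (1 - s) * t * (1 - t))) *
        (Real.sin (ω * Real.log (s / (1 - s))) / Real.sqrt (s * (1 - s))))
      = ∫ s in ε..t, (1 / t) *
        (Real.sin (ω * Real.log (s / (1 - s))) / ((1 - s) * Real.sqrt (s * (1 - s)))) := by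
    apply intervalIntegral.integral_congr
    intro s hs
    rw [Set.uIcc_of_le htl] at hs
    obtain ⟨h1, h2⟩ := hs
    have ha : 0 < s := by linarith
    have hb : 0 < 1 - s := by linarith
    have hmin : min s t = s := min_eq_left h2
    have hsq : 0 < Real.sqrt (s * (1 - s)) := Real.sqrt_pos.mpr (by positivity)
    simp only [hmin]
    field_simp
  have hco2 : (∫ s in t..(1 - ε),
      ((min s t - s * t) / (s * (1 - s) * t * (1 - t))) *
        (Real.sin (ω * Real.log (s / (1 - s))) / Real.sqrt (s * (1 - s))))
      = ∫ s in t..(1 - ε), (1 / (1 - t)) *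
        (Real.sin (ω * Real.log (s / (1 - s))) / (s * Real.sqrt (s * (1 - s)))) := by
    apply intervalIntegral.integral_congr
    intro s hs
    rw [Set.uIcc_of_le htr] at hs
    obtain ⟨h1, h2⟩ := hs
    have ha : 0 < s := by linarith
    have hb : 0 < 1 - s := by linarith
    have hmin : min s t = t := min_eq_right h1
    have hsq : 0 < Real.sqrt (s * (1 - s)) := Real.sqrt_pos.mpr (by positivity)
    simp only [hmin]
    field_simp
  -- fundamental theorem of calculus on each piece
  have hI1 : (∫ s in ε..t,
      Real.sin (ω * Real.log (s / (1 - s))) / ((1 - s) * Real.sqrt (s * (1 - s))))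
      = G1 ω t - G1 ω ε := by
    apply intervalIntegral.integral_eq_sub_of_hasDerivAt
    · intro s hs
      have hs' := hsub1 hs
      obtain ⟨h1, h2⟩ := hs'
      exact hasDerivAt_G1 ω hω (by linarith) (by linarith)
    · exact ((contOn_g1 ω ε hε hε').mono hsub1).intervalIntegrable
  have hI2 : (∫ s in t..(1 - ε),
      Real.sin (ω * Real.log (s / (1 - s))) / (s * Real.sqrt (s * (1 - s))))
      = G2 ω (1 - ε) - G2 ω t := by
    apply intervalIntegral.integral_eq_sub_of_hasDerivAt
    · intro s hs
      have hs' := hsub2 hs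
      obtain ⟨h1, h2⟩ := hs'
      exact hasDerivAt_G2 ω hω (by linarith) (by linarith)
    · exact ((contOn_g2 ω ε hε hε').mono hsub2).intervalIntegrable
  rw [hco1, hco2, intervalIntegral.integral_const_mul, intervalIntegral.integral_const_mul,
    hI1, hI2, hG1ε, hG2b]
  -- final algebra
  rw [G1, G2]
  rw [Real.log_div h0t.ne' h1t.ne', exp_half_sub h0t ht1, Real.sqrt_mul h0t.le]
  have hexp2 : Real.exp ((Real.log (1 - t) - Real.log t) / 2)
      = Real.sqrt (1 - t) / Real.sqrt t := by
    rw [sub_div, Real.exp_sub, exp_half_log h0t, exp_half_log h1t]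
  rw [hexp2]
  have hst : Real.sqrt t * Real.sqrt t = t := Real.mul_self_sqrt h0t.le
  have hs1t : Real.sqrt (1 - t) * Real.sqrt (1 - t) = 1 - t := Real.mul_self_sqrt h1t.le
  have htne : Real.sqrt t ≠ 0 := by positivity
  have h1tne : Real.sqrt (1 - t) ≠ 0 := by positivity
  have hcne : (ω:ℝ) ^ 2 + 1/4 ≠ 0 := by positivity
  set S := Real.sin (ω * (Real.log t - Real.log (1 - t)))
  set C := Real.cos (ω * (Real.log t - Real.log (1 - t)))
  field_simp
  ring_nf
  simp only [show Real.sqrt t ^ 3 = t * Real.sqrt t from by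
      rw [pow_succ, Real.sq_sqrt h0t.le],
    show Real.sqrt (1 - t) ^ 3 = (1 - t) * Real.sqrt (1 - t) from by
      rw [pow_succ, Real.sq_sqrt h1t.le],
    Real.sq_sqrt h0t.le, Real.sq_sqrt h1t.le]
  ring
end

section
/- Let 0 < ε < 1/2 and L = ln((1−ε)/ε). For ω > 0 with tan(ωL) = 1/(2ω) define f_ω(t) = (t(1−t))^{−1/2} cos(ω ln(t/(1−t))), and for ω > 0 with tan(ωL) = −2ω define g_ω(t) = (t(1−t))^{−1/2} sin(ω ln(t/(1−t))), for t ∈ [ε, 1−ε]. Then: (i) if ω₁ ≠ ω₂ both satisfy the cosine condition, ∫_ε^{1−ε} f_{ω₁}(t) f_{ω₂}(t) dt = 0; (ii) if ω₁ ≠ ω₂ both satisfy the sine condition, ∫_ε^{1−ε} g_{ω₁}(t) g_{ω₂}(t) dt = 0; (iii) if ω₁ satisfies the cosine condition and ω₂ the sine condition, ∫_ε^{1−ε} f_{ω₁}(t) g_{ω₂}(t) dt = 0. -/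
open MeasureTheory intervalIntegral

/-- Cosine-type eigenfunction `f_ω(t) = (t(1−t))^{−1/2} cos(ω ln(t/(1−t)))`. -/
noncomputable def fEig (ω t : ℝ) : ℝ :=
  Real.cos (ω * Real.log (t / (1 - t))) / Real.sqrt (t * (1 - t))

/-- Sine-type eigenfunction `g_ω(t) = (t(1−t))^{−1/2} sin(ω ln(t/(1−t)))`. -/
noncomputable def gEig (ω t : ℝ) : ℝ :=
  Real.sin (ω * Real.log (t / (1 - t))) / Real.sqrt (t * (1 - t))

/-- Substitution `u = log (t/(1-t))`. -/
lemma key_subst (ε : ℝ) (hε : 0 < ε) (hε' : ε < 1 / 2) (h : ℝ → ℝ) (hc : Continuous h) :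
    (∫ t in ε..(1 - ε), h (Real.log (t / (1 - t))) / (t * (1 - t)))
      = ∫ u in (-(Real.log ((1 - ε) / ε)))..(Real.log ((1 - ε) / ε)), h u := by
  have hεle : ε ≤ 1 - ε := by linarith
  have huIcc : Set.uIcc ε (1 - ε) = Set.Icc ε (1 - ε) := Set.uIcc_of_le hεle
  have hmem : ∀ x ∈ Set.uIcc ε (1 - ε), 0 < x ∧ x < 1 := by
    intro x hx
    rw [huIcc] at hx
    exact ⟨lt_of_lt_of_le hε hx.1, by linarith [hx.2]⟩
  have hd : ∀ x ∈ Set.uIcc ε (1 - ε),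
      HasDerivAt (fun t => Real.log t - Real.log (1 - t)) (1 / (x * (1 - x))) x := by
    intro x hx
    obtain ⟨hx0, hx1⟩ := hmem x hx
    have h1 : HasDerivAt Real.log (1 / x) x := by
      simpa [one_div] using Real.hasDerivAt_log (ne_of_gt hx0)
    have h2 : HasDerivAt (fun t : ℝ => 1 - t) (-1) x := by
      exact (hasDerivAt_id x).const_sub 1
    have h3 : HasDerivAt (fun t : ℝ => Real.log (1 - t)) ((1 - x)⁻¹ * (-1)) x :=
      (Real.hasDerivAt_log (by linarith : (1:ℝ) - x ≠ 0)).comp x h2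
    have hx0' : x ≠ 0 := ne_of_gt hx0
    have hx1' : (1:ℝ) - x ≠ 0 := by linarith
    have := h1.sub h3
    rw [show 1 / (x * (1 - x)) = 1 / x - (1 - x)⁻¹ * (-1) by field_simp; ring]
    exact this
  have hcont : ContinuousOn (fun x => 1 / (x * (1 - x))) (Set.uIcc ε (1 - ε)) := by
    apply ContinuousOn.div continuousOn_const
    · exact (continuousOn_id.mul (continuousOn_const.sub continuousOn_id))
    · intro x hx
      obtain ⟨hx0, hx1⟩ := hmem x hx
      exact ne_of_gt (mul_pos hx0 (by linarith))
  have key := intervalIntegral.integral_comp_smul_deriv hd hcont hc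
  have hL : Real.log ε - Real.log (1 - ε) = -(Real.log ((1 - ε) / ε)) := by
    rw [Real.log_div (by linarith) (ne_of_gt hε)]
    ring
  have hR : Real.log (1 - ε) - Real.log (1 - (1 - ε)) = Real.log ((1 - ε) / ε) := by
    rw [Real.log_div (by linarith) (ne_of_gt hε)]
    ring_nf
  rw [hL, hR] at key
  rw [← key]
  apply intervalIntegral.integral_congr
  intro x hx
  obtain ⟨hx0, hx1⟩ := hmem x hx
  have hlog : Real.log (x / (1 - x)) = Real.log x - Real.log (1 - x) :=
    Real.log_div (ne_of_gt hx0) (by linarith)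
  simp only [Function.comp, smul_eq_mul, hlog]
  ring

lemma int_cos (c L : ℝ) (hc : c ≠ 0) :
    (∫ u in (-L)..L, Real.cos (c * u)) = 2 * Real.sin (c * L) / c := by
  rw [intervalIntegral.integral_comp_mul_left (fun x => Real.cos x) hc]
  simp [integral_cos, Real.sin_neg, mul_comm]
  ring

lemma int_sin (c L : ℝ) :
    (∫ u in (-L)..L, Real.sin (c * u)) = 0 := by
  rcases eq_or_ne c 0 with rfl | hc
  · simp
  · rw [intervalIntegral.integral_comp_mul_left (fun x => Real.sin x) hc]
    simp [integral_sin, Real.cos_neg, mul_comm]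

lemma tan_rel {a w : ℝ} (hw : 0 < w) (h : Real.tan a = 1 / (2 * w)) :
    Real.sin a * (2 * w) = Real.cos a := by
  have hca : Real.cos a ≠ 0 := by
    intro hc
    rw [Real.tan_eq_sin_div_cos, hc, div_zero] at h
    have : (1:ℝ) / (2 * w) ≠ 0 := by positivity
    exact this h.symm
  rw [Real.tan_eq_sin_div_cos] at h
  field_simp at h
  linarith

lemma tan_rel' {a w : ℝ} (hw : 0 < w) (h : Real.tan a = -(2 * w)) :
    Real.sin a = -(2 * w) * Real.cos a := by
  have hca : Real.cos a ≠ 0 := by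
    intro hc
    rw [Real.tan_eq_sin_div_cos, hc, div_zero] at h
    nlinarith
  rw [Real.tan_eq_sin_div_cos] at h
  field_simp at h
  linarith

/-- Let `0 < ε < 1/2` and `L = ln((1−ε)/ε)`. Among the
eigenfunctions `f_ω` (for `ω > 0` with `tan(ωL) = 1/(2ω)`) and `g_ω` (for `ω > 0`
with `tan(ωL) = −2ω`) on `[ε, 1−ε]`:
(i) any two distinct cosine-type eigenfunctions are orthogonal;
(ii) any two distinct sine-type eigenfunctions are orthogonal;
(iii) any cosine-type eigenfunction is orthogonal to any sine-type one. -/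
theorem eigenfunctions_orthogonal
    (ε : ℝ) (hε : 0 < ε) (hε' : ε < 1 / 2) :
    (∀ ω₁ ω₂ : ℝ, 0 < ω₁ → 0 < ω₂ → ω₁ ≠ ω₂ →
      Real.tan (ω₁ * Real.log ((1 - ε) / ε)) = 1 / (2 * ω₁) →
      Real.tan (ω₂ * Real.log ((1 - ε) / ε)) = 1 / (2 * ω₂) →
      ∫ t in ε..(1 - ε), fEig ω₁ t * fEig ω₂ t = 0) ∧
    (∀ ω₁ ω₂ : ℝ, 0 < ω₁ → 0 < ω₂ → ω₁ ≠ ω₂ →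
      Real.tan (ω₁ * Real.log ((1 - ε) / ε)) = -(2 * ω₁) →
      Real.tan (ω₂ * Real.log ((1 - ε) / ε)) = -(2 * ω₂) →
      ∫ t in ε..(1 - ε), gEig ω₁ t * gEig ω₂ t = 0) ∧
    (∀ ω₁ ω₂ : ℝ, 0 < ω₁ → 0 < ω₂ →
      Real.tan (ω₁ * Real.log ((1 - ε) / ε)) = 1 / (2 * ω₁) →
      Real.tan (ω₂ * Real.log ((1 - ε) / ε)) = -(2 * ω₂) →
      ∫ t in ε..(1 - ε), fEig ω₁ t * gEig ω₂ t = 0) := by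
  set L := Real.log ((1 - ε) / ε) with hLdef
  have hεle : ε ≤ 1 - ε := by linarith
  have hmem : ∀ x ∈ Set.uIcc ε (1 - ε), 0 < x * (1 - x) := by
    intro x hx
    rw [Set.uIcc_of_le hεle] at hx
    have h1 : 0 < x := lt_of_lt_of_le hε hx.1
    have h2 : x < 1 := by linarith [hx.2]
    exact mul_pos h1 (by linarith)
  -- pointwise rewriting of products
  have hff : ∀ ω₁ ω₂ : ℝ, ∫ t in ε..(1 - ε), fEig ω₁ t * fEig ω₂ t
      = ∫ u in (-L)..L, Real.cos (ω₁ * u) * Real.cos (ω₂ * u) := by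
    intro ω₁ ω₂
    rw [← key_subst ε hε hε' (fun u => Real.cos (ω₁ * u) * Real.cos (ω₂ * u))
      ((Real.continuous_cos.comp (continuous_const.mul continuous_id)).mul
        (Real.continuous_cos.comp (continuous_const.mul continuous_id)))]
    apply intervalIntegral.integral_congr
    intro x hx
    have hp := hmem x hx
    have hs : Real.sqrt (x * (1 - x)) * Real.sqrt (x * (1 - x)) = x * (1 - x) :=
      Real.mul_self_sqrt (le_of_lt hp)
    simp only [fEig]
    rw [div_mul_div_comm, hs]
  have hgg : ∀ ω₁ ω₂ : ℝ, ∫ t in ε..(1 - ε), gEig ω₁ t * gEig ω₂ t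
      = ∫ u in (-L)..L, Real.sin (ω₁ * u) * Real.sin (ω₂ * u) := by
    intro ω₁ ω₂
    rw [← key_subst ε hε hε' (fun u => Real.sin (ω₁ * u) * Real.sin (ω₂ * u))
      ((Real.continuous_sin.comp (continuous_const.mul continuous_id)).mul
        (Real.continuous_sin.comp (continuous_const.mul continuous_id)))]
    apply intervalIntegral.integral_congr
    intro x hx
    have hp := hmem x hx
    have hs : Real.sqrt (x * (1 - x)) * Real.sqrt (x * (1 - x)) = x * (1 - x) :=
      Real.mul_self_sqrt (le_of_lt hp)
    simp only [gEig]
    rw [div_mul_div_comm, hs]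
  have hfg : ∀ ω₁ ω₂ : ℝ, ∫ t in ε..(1 - ε), fEig ω₁ t * gEig ω₂ t
      = ∫ u in (-L)..L, Real.cos (ω₁ * u) * Real.sin (ω₂ * u) := by
    intro ω₁ ω₂
    rw [← key_subst ε hε hε' (fun u => Real.cos (ω₁ * u) * Real.sin (ω₂ * u))
      ((Real.continuous_cos.comp (continuous_const.mul continuous_id)).mul
        (Real.continuous_sin.comp (continuous_const.mul continuous_id)))]
    apply intervalIntegral.integral_congr
    intro x hx
    have hp := hmem x hx
    have hs : Real.sqrt (x * (1 - x)) * Real.sqrt (x * (1 - x)) = x * (1 - x) :=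
      Real.mul_self_sqrt (le_of_lt hp)
    simp only [fEig, gEig]
    rw [div_mul_div_comm, hs]
  have hint : ∀ c : ℝ, IntervalIntegrable (fun u => Real.cos (c * u)) volume (-L) L := by
    intro c
    exact (Real.continuous_cos.comp (continuous_const.mul continuous_id)).intervalIntegrable _ _
  have hints : ∀ c : ℝ, IntervalIntegrable (fun u => Real.sin (c * u)) volume (-L) L := by
    intro c
    exact (Real.continuous_sin.comp (continuous_const.mul continuous_id)).intervalIntegrable _ _
  refine ⟨?_, ?_, ?_⟩
  · intro ω₁ ω₂ h1 h2 hne ht1 ht2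
    rw [hff]
    have hd : ω₁ - ω₂ ≠ 0 := sub_ne_zero.mpr hne
    have hsm : ω₁ + ω₂ ≠ 0 := by positivity
    have heq : ∀ u : ℝ, Real.cos (ω₁ * u) * Real.cos (ω₂ * u)
        = (Real.cos ((ω₁ - ω₂) * u) + Real.cos ((ω₁ + ω₂) * u)) / 2 := by
      intro u
      have e1 : (ω₁ - ω₂) * u = ω₁ * u - ω₂ * u := by ring
      have e2 : (ω₁ + ω₂) * u = ω₁ * u + ω₂ * u := by ring
      rw [e1, e2, Real.cos_sub, Real.cos_add]
      ring
    simp_rw [heq]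
    rw [intervalIntegral.integral_div, intervalIntegral.integral_add (hint _) (hint _),
      int_cos _ _ hd, int_cos _ _ hsm]
    have ha := tan_rel h1 ht1
    have hb := tan_rel h2 ht2
    have e1 : (ω₁ - ω₂) * L = ω₁ * L - ω₂ * L := by ring
    have e2 : (ω₁ + ω₂) * L = ω₁ * L + ω₂ * L := by ring
    rw [e1, e2, Real.sin_sub, Real.sin_add]
    field_simp
    rw [mul_comm L ω₂]
    linear_combination Real.cos (ω₂ * L) * ha - Real.cos (ω₁ * L) * hb
  · intro ω₁ ω₂ h1 h2 hne ht1 ht2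
    rw [hgg]
    have hd : ω₁ - ω₂ ≠ 0 := sub_ne_zero.mpr hne
    have hsm : ω₁ + ω₂ ≠ 0 := by positivity
    have heq : ∀ u : ℝ, Real.sin (ω₁ * u) * Real.sin (ω₂ * u)
        = (Real.cos ((ω₁ - ω₂) * u) - Real.cos ((ω₁ + ω₂) * u)) / 2 := by
      intro u
      have e1 : (ω₁ - ω₂) * u = ω₁ * u - ω₂ * u := by ring
      have e2 : (ω₁ + ω₂) * u = ω₁ * u + ω₂ * u := by ring
      rw [e1, e2, Real.cos_sub, Real.cos_add]
      ring
    simp_rw [heq]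
    rw [intervalIntegral.integral_div, intervalIntegral.integral_sub (hint _) (hint _),
      int_cos _ _ hd, int_cos _ _ hsm]
    have ha := tan_rel' h1 ht1
    have hb := tan_rel' h2 ht2
    have e1 : (ω₁ - ω₂) * L = ω₁ * L - ω₂ * L := by ring
    have e2 : (ω₁ + ω₂) * L = ω₁ * L + ω₂ * L := by ring
    rw [e1, e2, Real.sin_sub, Real.sin_add, ha, hb]
    field_simp
    ring
  · intro ω₁ ω₂ h1 h2 ht1 ht2
    rw [hfg]
    have heq : ∀ u : ℝ, Real.cos (ω₁ * u) * Real.sin (ω₂ * u)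
        = (Real.sin ((ω₁ + ω₂) * u) - Real.sin ((ω₁ - ω₂) * u)) / 2 := by
      intro u
      have e1 : (ω₁ - ω₂) * u = ω₁ * u - ω₂ * u := by ring
      have e2 : (ω₁ + ω₂) * u = ω₁ * u + ω₂ * u := by ring
      rw [e1, e2, Real.sin_sub, Real.sin_add]
      ring
    simp_rw [heq]
    rw [intervalIntegral.integral_div, intervalIntegral.integral_sub (hints _) (hints _),
      int_sin, int_sin]
    norm_num
end

section
/- Fix 0 < t < s < 1. For each n ≥ 1 let i_n, j_n be integers with 1 ≤ i_n ≤ j_n ≤ n+1 such that i_n/(n+1) → t and j_n/(n+1) → s as n → ∞. For 1 ≤ k ≤ n set ψ_k^{(n)} = (n+1)²/(k(n+1−k)), and define κ_n = (1/(n+1)²) Σ_{k=1}^n ψ_k^{(n)} ( max(0, k + i_n − j_n) + max(0, k − i_n + j_n − (n+1)) − k²/(n+1) ). Then κ_n → 2( (s−t) ln(s−t) + (1−(s−t)) ln(1−(s−t)) ) + 1 as n → ∞. -/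
open Filter Finset

namespace ADKernel

/-- Harmonic number as a real sum over `Icc 1 n`. -/
noncomputable def H (n : ℕ) : ℝ := ∑ k ∈ Finset.Icc 1 n, ((k : ℝ))⁻¹

lemma H_eq_harmonic (n : ℕ) : H n = ((harmonic n : ℚ) : ℝ) := by
  rw [harmonic_eq_sum_Icc]
  push_cast [H]
  rfl

lemma Icc_one_eq_Ioc (n : ℕ) : Finset.Icc 1 n = Finset.Ioc 0 n := by
  rw [← Finset.Icc_add_one_left_eq_Ioc, zero_add]

lemma H_eq_Ioc (n : ℕ) : H n = ∑ k ∈ Finset.Ioc 0 n, ((k : ℝ))⁻¹ := by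
  rw [H, Icc_one_eq_Ioc]

lemma sum_inv_Ioc {a b : ℕ} (h : a ≤ b) :
    ∑ k ∈ Finset.Ioc a b, ((k : ℝ))⁻¹ = H b - H a := by
  have := Finset.sum_Ioc_consecutive (fun k : ℕ => ((k : ℝ))⁻¹) (Nat.zero_le a) h
  rw [H_eq_Ioc, H_eq_Ioc, ← this]
  ring

lemma sum_inv_reflect {n d : ℕ} (hd : d ≤ n) :
    ∑ k ∈ Finset.Ioc d n, (((n : ℝ) + 1) - (k : ℝ))⁻¹ = H (n - d) := by
  rw [H, Icc_one_eq_Ioc]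
  refine Finset.sum_nbij' (fun k => n + 1 - k) (fun l => n + 1 - l) ?_ ?_ ?_ ?_ ?_
  · intro a ha
    simp only [Finset.mem_Ioc] at ha ⊢
    omega
  · intro a ha
    simp only [Finset.mem_Ioc] at ha ⊢
    omega
  · intro a ha
    simp only [Finset.mem_Ioc] at ha
    show n + 1 - (n + 1 - a) = a
    omega
  · intro a ha
    simp only [Finset.mem_Ioc] at ha
    show n + 1 - (n + 1 - a) = a
    omega
  · intro a ha
    simp only [Finset.mem_Ioc] at ha
    have : (((n + 1 - a : ℕ)) : ℝ) = (n : ℝ) + 1 - (a : ℝ) := by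
      have : a ≤ n + 1 := by omega
      push_cast [Nat.cast_sub this]
      ring
    rw [this]

end ADKernel

namespace ADKernel

lemma ptfrac {m c k : ℝ} (hk : 0 < k) (hkm : k < m) :
    (k - c) / (k * (m - k)) = -(c / m) * k⁻¹ + ((m - c) / m) * (m - k)⁻¹ := by
  have hm : (0:ℝ) < m := hk.trans hkm
  have h1 : k ≠ 0 := hk.ne'
  have h2 : m - k ≠ 0 := by linarith
  have h3 : m ≠ 0 := hm.ne'
  field_simp
  ring

lemma S1 (n d : ℕ) (hdn : d ≤ n) :
    ∑ k ∈ Finset.Icc 1 n, max 0 ((k : ℝ) - (d : ℝ)) / ((k : ℝ) * (((n : ℝ) + 1) - (k : ℝ)))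
      = -((d : ℝ) / ((n : ℝ) + 1)) * (H n - H d)
        + ((((n : ℝ) + 1) - (d : ℝ)) / ((n : ℝ) + 1)) * H (n - d) := by
  rw [Icc_one_eq_Ioc,
    ← Finset.sum_Ioc_consecutive
      (fun k : ℕ => max 0 ((k : ℝ) - (d : ℝ)) / ((k : ℝ) * (((n : ℝ) + 1) - (k : ℝ))))
      (Nat.zero_le d) hdn]
  have h1 : ∑ k ∈ Finset.Ioc 0 d,
      max 0 ((k : ℝ) - (d : ℝ)) / ((k : ℝ) * (((n : ℝ) + 1) - (k : ℝ))) = 0 := by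
    refine Finset.sum_eq_zero fun k hk => ?_
    simp only [Finset.mem_Ioc] at hk
    have : (k : ℝ) - (d : ℝ) ≤ 0 := by
      have : (k : ℝ) ≤ (d : ℝ) := Nat.cast_le.mpr hk.2
      linarith
    rw [max_eq_left this, zero_div]
  have h2 : ∑ k ∈ Finset.Ioc d n,
      max 0 ((k : ℝ) - (d : ℝ)) / ((k : ℝ) * (((n : ℝ) + 1) - (k : ℝ)))
      = ∑ k ∈ Finset.Ioc d n,
        (-((d : ℝ) / ((n : ℝ) + 1)) * ((k : ℝ))⁻¹
          + ((((n : ℝ) + 1) - (d : ℝ)) / ((n : ℝ) + 1)) * ((((n : ℝ) + 1) - (k : ℝ)))⁻¹) := by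
    refine Finset.sum_congr rfl fun k hk => ?_
    simp only [Finset.mem_Ioc] at hk
    have hk0 : (0 : ℝ) < (k : ℝ) := by
      have : 0 < k := by omega
      exact_mod_cast this
    have hkm : (k : ℝ) < (n : ℝ) + 1 := by
      have : k < n + 1 := by omega
      exact_mod_cast this
    have hmax : max 0 ((k : ℝ) - (d : ℝ)) = (k : ℝ) - (d : ℝ) := by
      have : (d : ℝ) < (k : ℝ) := Nat.cast_lt.mpr hk.1
      exact max_eq_right (by linarith)
    rw [hmax, ptfrac hk0 hkm]
  rw [h1, h2, Finset.sum_add_distrib, ← Finset.mul_sum, ← Finset.mul_sum,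
    sum_inv_Ioc hdn, sum_inv_reflect hdn, zero_add]

lemma S2 (n d : ℕ) (hd1 : 1 ≤ d) (hdn : d ≤ n) :
    ∑ k ∈ Finset.Icc 1 n,
        max 0 ((k : ℝ) + (d : ℝ) - ((n : ℝ) + 1)) / ((k : ℝ) * (((n : ℝ) + 1) - (k : ℝ)))
      = -(((((n : ℝ) + 1) - (d : ℝ)) / ((n : ℝ) + 1))) * (H n - H (n + 1 - d))
        + ((d : ℝ) / ((n : ℝ) + 1)) * H (d - 1) := by
  have he : n + 1 - d ≤ n := by omega
  have hecast : ((n + 1 - d : ℕ) : ℝ) = (n : ℝ) + 1 - (d : ℝ) := by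
    have : d ≤ n + 1 := by omega
    push_cast [Nat.cast_sub this]
    ring
  rw [Icc_one_eq_Ioc,
    ← Finset.sum_Ioc_consecutive
      (fun k : ℕ => max 0 ((k : ℝ) + (d : ℝ) - ((n : ℝ) + 1)) / ((k : ℝ) * (((n : ℝ) + 1) - (k : ℝ))))
      (Nat.zero_le (n + 1 - d)) he]
  have h1 : ∑ k ∈ Finset.Ioc 0 (n + 1 - d),
      max 0 ((k : ℝ) + (d : ℝ) - ((n : ℝ) + 1)) / ((k : ℝ) * (((n : ℝ) + 1) - (k : ℝ))) = 0 := by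
    refine Finset.sum_eq_zero fun k hk => ?_
    simp only [Finset.mem_Ioc] at hk
    have : (k : ℝ) ≤ ((n + 1 - d : ℕ) : ℝ) := Nat.cast_le.mpr hk.2
    rw [hecast] at this
    rw [max_eq_left (by linarith), zero_div]
  have h2 : ∑ k ∈ Finset.Ioc (n + 1 - d) n,
      max 0 ((k : ℝ) + (d : ℝ) - ((n : ℝ) + 1)) / ((k : ℝ) * (((n : ℝ) + 1) - (k : ℝ)))
      = ∑ k ∈ Finset.Ioc (n + 1 - d) n,
        (-(((((n : ℝ) + 1) - (d : ℝ)) / ((n : ℝ) + 1))) * ((k : ℝ))⁻¹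
          + ((d : ℝ) / ((n : ℝ) + 1)) * ((((n : ℝ) + 1) - (k : ℝ)))⁻¹) := by
    refine Finset.sum_congr rfl fun k hk => ?_
    simp only [Finset.mem_Ioc] at hk
    have hk0 : (0 : ℝ) < (k : ℝ) := by
      have : 0 < k := by omega
      exact_mod_cast this
    have hkm : (k : ℝ) < (n : ℝ) + 1 := by
      have : k < n + 1 := by omega
      exact_mod_cast this
    have hlt : ((n + 1 - d : ℕ) : ℝ) < (k : ℝ) := Nat.cast_lt.mpr hk.1
    rw [hecast] at hlt
    have hmax : max 0 ((k : ℝ) + (d : ℝ) - ((n : ℝ) + 1))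
        = (k : ℝ) - (((n : ℝ) + 1) - (d : ℝ)) := by
      rw [max_eq_right (by linarith)]; ring
    rw [hmax, ptfrac hk0 hkm]
    have : (n : ℝ) + 1 - (((n : ℝ) + 1) - (d : ℝ)) = (d : ℝ) := by ring
    rw [this]
  have h3 : n - (n + 1 - d) = d - 1 := by omega
  rw [h1, h2, Finset.sum_add_distrib, ← Finset.mul_sum, ← Finset.mul_sum,
    sum_inv_Ioc he, sum_inv_reflect he, h3, zero_add]

lemma S3 (n : ℕ) :
    ∑ k ∈ Finset.Icc 1 n, (k : ℝ) / (((n : ℝ) + 1) * (((n : ℝ) + 1) - (k : ℝ)))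
      = H n - (n : ℝ) / ((n : ℝ) + 1) := by
  have h2 : ∑ k ∈ Finset.Icc 1 n, (k : ℝ) / (((n : ℝ) + 1) * (((n : ℝ) + 1) - (k : ℝ)))
      = ∑ k ∈ Finset.Icc 1 n,
        (((((n : ℝ) + 1) - (k : ℝ)))⁻¹ - ((n : ℝ) + 1)⁻¹) := by
    refine Finset.sum_congr rfl fun k hk => ?_
    simp only [Finset.mem_Icc] at hk
    have hk0 : (0 : ℝ) < (k : ℝ) := by
      have : 0 < k := hk.1
      exact_mod_cast this
    have hkm : (k : ℝ) < (n : ℝ) + 1 := by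
      have : k < n + 1 := by omega
      exact_mod_cast this
    have hm : (0 : ℝ) < (n : ℝ) + 1 := hk0.trans hkm
    have h1 : ((n : ℝ) + 1) - (k : ℝ) ≠ 0 := by linarith
    have h3 : ((n : ℝ) + 1) ≠ 0 := hm.ne'
    rw [inv_eq_one_div, inv_eq_one_div, div_sub_div _ _ h1 h3,
      div_eq_div_iff (by positivity) (by positivity)]
    ring
  rw [h2, Finset.sum_sub_distrib, Finset.sum_const, Nat.card_Icc]
  have : ∑ k ∈ Finset.Icc 1 n, ((((n : ℝ) + 1) - (k : ℝ)))⁻¹ = H n := by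
    rw [Icc_one_eq_Ioc]
    simpa using sum_inv_reflect (Nat.zero_le n)
  rw [this]
  simp [nsmul_eq_mul, div_eq_mul_inv]

end ADKernel

namespace ADKernel

lemma key_identity (n d : ℕ) (hd1 : 1 ≤ d) (hdn : d ≤ n) :
    ∑ k ∈ Finset.Icc 1 n,
        (max 0 ((k : ℝ) - (d : ℝ)) + max 0 ((k : ℝ) + (d : ℝ) - ((n : ℝ) + 1))
            - (k : ℝ) ^ 2 / ((n : ℝ) + 1)) / ((k : ℝ) * (((n : ℝ) + 1) - (k : ℝ)))
      = ((d : ℝ) / ((n : ℝ) + 1)) * ((H d - H n) + (H (d - 1) - H n))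
        + ((((n : ℝ) + 1) - (d : ℝ)) / ((n : ℝ) + 1))
            * ((H (n - d) - H n) + (H (n + 1 - d) - H n))
        + (n : ℝ) / ((n : ℝ) + 1) := by
  have hsplit : ∀ k ∈ Finset.Icc 1 n,
      (max 0 ((k : ℝ) - (d : ℝ)) + max 0 ((k : ℝ) + (d : ℝ) - ((n : ℝ) + 1))
          - (k : ℝ) ^ 2 / ((n : ℝ) + 1)) / ((k : ℝ) * (((n : ℝ) + 1) - (k : ℝ)))
      = max 0 ((k : ℝ) - (d : ℝ)) / ((k : ℝ) * (((n : ℝ) + 1) - (k : ℝ)))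
        + max 0 ((k : ℝ) + (d : ℝ) - ((n : ℝ) + 1)) / ((k : ℝ) * (((n : ℝ) + 1) - (k : ℝ)))
        - (k : ℝ) / (((n : ℝ) + 1) * (((n : ℝ) + 1) - (k : ℝ))) := by
    intro k hk
    simp only [Finset.mem_Icc] at hk
    have hk0 : (0 : ℝ) < (k : ℝ) := by
      have : 0 < k := hk.1
      exact_mod_cast this
    have hkm : (k : ℝ) < (n : ℝ) + 1 := by
      have : k < n + 1 := by omega
      exact_mod_cast this
    have h1 : (k : ℝ) ≠ 0 := hk0.ne'
    have h2 : ((n : ℝ) + 1) - (k : ℝ) ≠ 0 := by linarith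
    have h3 : ((n : ℝ) + 1) ≠ 0 := by positivity
    field_simp
  rw [Finset.sum_congr rfl hsplit, Finset.sum_sub_distrib, Finset.sum_add_distrib,
    S1 n d hdn, S2 n d hd1 hdn, S3 n]
  have h3 : ((n : ℝ) + 1) ≠ 0 := by positivity
  field_simp
  ring

end ADKernel

namespace ADKernel

lemma tendsto_H_sub (a : ℕ → ℕ) (c : ℝ) (hc : 0 < c)
    (ha : Tendsto (fun n : ℕ => (a n : ℝ) / ((n : ℝ) + 1)) atTop (nhds c)) :
    Tendsto (fun n : ℕ => H (a n) - H n) atTop (nhds (Real.log c)) := by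
  have hA : Tendsto (fun n : ℕ => ((a n : ℝ))) atTop atTop := by
    have h0 : Tendsto (fun n : ℕ => ((n : ℝ) + 1)) atTop atTop :=
      Filter.tendsto_atTop_add_const_right atTop (1 : ℝ) (tendsto_natCast_atTop_atTop (R := ℝ))
    have h1 : Tendsto (fun n : ℕ => (c / 2) * ((n : ℝ) + 1)) atTop atTop :=
      h0.const_mul_atTop (by linarith)
    refine tendsto_atTop_mono' _ ?_ h1
    filter_upwards [ha.eventually (eventually_gt_nhds (show c / 2 < c by linarith))] with n hn
    have hm : (0 : ℝ) < (n : ℝ) + 1 := by positivity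
    have := (lt_div_iff₀ hm).mp hn
    linarith
  have haN : Tendsto a atTop atTop := tendsto_natCast_atTop_iff.mp hA
  have hE : Tendsto (fun n : ℕ => H n - Real.log n) atTop (nhds Real.eulerMascheroniConstant) := by
    refine Real.tendsto_harmonic_sub_log.congr fun n => ?_
    rw [H_eq_harmonic]
  have hEa : Tendsto (fun n : ℕ => H (a n) - Real.log (a n)) atTop
      (nhds Real.eulerMascheroniConstant) := hE.comp haN
  have hq : Tendsto (fun n : ℕ => (a n : ℝ) / (n : ℝ)) atTop (nhds c) := by
    have h2 : Tendsto (fun n : ℕ => ((n : ℝ) + 1) / (n : ℝ)) atTop (nhds 1) := by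
      have h3 : Tendsto (fun n : ℕ => 1 + 1 / (n : ℝ)) atTop (nhds 1) := by
        simpa using (tendsto_const_nhds (x := (1 : ℝ))).add tendsto_one_div_atTop_nhds_zero_nat
      refine h3.congr' ?_
      filter_upwards [eventually_ge_atTop 1] with n hn
      have hn0 : (n : ℝ) ≠ 0 := by
        have : 0 < n := hn
        positivity
      field_simp
    have h4 := ha.mul h2
    rw [mul_one] at h4
    refine h4.congr' ?_
    filter_upwards [eventually_ge_atTop 1] with n hn
    have hn0 : (n : ℝ) ≠ 0 := by
      have : 0 < n := hn
      positivity
    have hm : ((n : ℝ) + 1) ≠ 0 := by positivity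
    field_simp
  have hlog : Tendsto (fun n : ℕ => Real.log (a n) - Real.log n) atTop
      (nhds (Real.log c)) := by
    refine (hq.log hc.ne').congr' ?_
    filter_upwards [eventually_ge_atTop 1, haN.eventually (eventually_ge_atTop 1)] with n h1 h2
    rw [Real.log_div (by exact_mod_cast Nat.one_le_iff_ne_zero.mp h2)
      (by exact_mod_cast Nat.one_le_iff_ne_zero.mp h1)]
  have hfinal := (hEa.sub hE).add hlog
  have heq : ∀ n : ℕ, ((H (a n) - Real.log (a n)) - (H n - Real.log n))
      + (Real.log (a n) - Real.log n) = H (a n) - H n := fun n => by ring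
  have : Real.eulerMascheroniConstant - Real.eulerMascheroniConstant + Real.log c
      = Real.log c := by ring
  rw [this] at hfinal
  exact hfinal.congr heq

end ADKernel

open ADKernel

/-- Fix `0 < t < s < 1` and sequences `1 ≤ i_n ≤ j_n ≤ n+1` (for
`n ≥ 1`) with `i_n/(n+1) → t`, `j_n/(n+1) → s`. With weights
`ψ_k = (n+1)²/(k(n+1−k))` (the circularized Anderson–Darling weights
`ψ_k = 1/(μ_k(1−μ_k))`, `μ_k = k/(n+1)`), the kernel-matrix entries
`κ_n = (1/(n+1)²) Σ_{k=1}^n ψ_k (max(0, k+i_n−j_n) + max(0, k−i_n+j_n−(n+1)) − k²/(n+1))`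
converge to `2((s−t) ln(s−t) + (1−(s−t)) ln(1−(s−t))) + 1`. -/
theorem kernel_limit_AD_circularized
    (t s : ℝ) (ht : 0 < t) (hts : t < s) (hs : s < 1)
    (i j : ℕ → ℕ)
    (hi1 : ∀ n, 1 ≤ n → 1 ≤ i n) (hij : ∀ n, 1 ≤ n → i n ≤ j n)
    (hjn : ∀ n, 1 ≤ n → j n ≤ n + 1)
    (hit : Tendsto (fun n : ℕ => (i n : ℝ) / ((n : ℝ) + 1)) atTop (nhds t))
    (hjs : Tendsto (fun n : ℕ => (j n : ℝ) / ((n : ℝ) + 1)) atTop (nhds s)) :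
    Tendsto (fun n : ℕ =>
        (1 / ((n : ℝ) + 1) ^ 2) *
          ∑ k ∈ Finset.Icc 1 n,
            (((n : ℝ) + 1) ^ 2 / ((k : ℝ) * (((n : ℝ) + 1) - (k : ℝ)))) *
              (max 0 ((k : ℝ) + (i n : ℝ) - (j n : ℝ))
                + max 0 ((k : ℝ) - (i n : ℝ) + (j n : ℝ) - ((n : ℝ) + 1))
                - (k : ℝ) ^ 2 / ((n : ℝ) + 1)))
      atTop
      (nhds (2 * ((s - t) * Real.log (s - t)
          + (1 - (s - t)) * Real.log (1 - (s - t))) + 1)) := by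
  have hδ : (0 : ℝ) < s - t := by linarith
  have hδ1 : s - t < 1 := by linarith
  have h1δ : (0 : ℝ) < 1 - (s - t) := by linarith
  -- the gap sequence
  have hd : Tendsto (fun n : ℕ => ((j n - i n : ℕ) : ℝ) / ((n : ℝ) + 1)) atTop
      (nhds (s - t)) := by
    refine (hjs.sub hit).congr' ?_
    filter_upwards [eventually_ge_atTop 1] with n hn
    rw [Nat.cast_sub (hij n hn)]
    ring
  have hm0 : Tendsto (fun n : ℕ => 1 / ((n : ℝ) + 1)) atTop (nhds 0) :=
    tendsto_one_div_add_atTop_nhds_zero_nat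
  have hdev : ∀ᶠ n in atTop, 1 ≤ j n - i n := by
    filter_upwards [hd.eventually (eventually_gt_nhds hδ)] with n h1
    by_contra h
    push_neg at h
    have : j n - i n = 0 := by omega
    rw [this] at h1
    simp at h1
  -- limits of the four harmonic differences
  have L1 : Tendsto (fun n : ℕ => H (j n - i n) - H n) atTop (nhds (Real.log (s - t))) :=
    tendsto_H_sub _ _ hδ hd
  have hd2 : Tendsto (fun n : ℕ => ((j n - i n - 1 : ℕ) : ℝ) / ((n : ℝ) + 1)) atTop
      (nhds (s - t)) := by
    have h4 := hd.sub hm0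
    rw [sub_zero] at h4
    refine h4.congr' ?_
    filter_upwards [hdev] with n hn
    rw [Nat.cast_sub hn]
    push_cast
    ring
  have L2 : Tendsto (fun n : ℕ => H (j n - i n - 1) - H n) atTop (nhds (Real.log (s - t))) :=
    tendsto_H_sub _ _ hδ hd2
  have hdn : ∀ᶠ n in atTop, j n - i n ≤ n := by
    filter_upwards [eventually_ge_atTop 1] with n hn
    have := hjn n hn
    have := hi1 n hn
    omega
  have hn1 : Tendsto (fun n : ℕ => (n : ℝ) / ((n : ℝ) + 1)) atTop (nhds 1) := by
    have h4 : Tendsto (fun n : ℕ => (1 : ℝ) - 1 / ((n : ℝ) + 1)) atTop (nhds ((1 : ℝ) - 0)) :=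
      tendsto_const_nhds.sub hm0
    rw [sub_zero] at h4
    refine h4.congr fun n => ?_
    have : ((n : ℝ) + 1) ≠ 0 := by positivity
    field_simp
    ring
  have hd3 : Tendsto (fun n : ℕ => ((n - (j n - i n) : ℕ) : ℝ) / ((n : ℝ) + 1)) atTop
      (nhds (1 - (s - t))) := by
    have h4 := hn1.sub hd
    refine h4.congr' ?_
    filter_upwards [hdn] with n hn
    rw [Nat.cast_sub hn]
    ring
  have L3 : Tendsto (fun n : ℕ => H (n - (j n - i n)) - H n) atTop
      (nhds (Real.log (1 - (s - t)))) := tendsto_H_sub _ _ h1δ hd3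
  have hd4 : Tendsto (fun n : ℕ => ((n + 1 - (j n - i n) : ℕ) : ℝ) / ((n : ℝ) + 1)) atTop
      (nhds (1 - (s - t))) := by
    have h4 : Tendsto (fun n : ℕ => (1 : ℝ) - ((j n - i n : ℕ) : ℝ) / ((n : ℝ) + 1)) atTop
        (nhds (1 - (s - t))) := tendsto_const_nhds.sub hd
    refine h4.congr' ?_
    filter_upwards [hdn] with n hn
    have hm : ((n : ℝ) + 1) ≠ 0 := by positivity
    have hcast : ((n + 1 - (j n - i n) : ℕ) : ℝ) = ((n : ℝ) + 1) - ((j n - i n : ℕ) : ℝ) := by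
      rw [Nat.cast_sub (by omega : j n - i n ≤ n + 1)]
      push_cast
      ring
    rw [hcast, one_sub_div hm]
  have L4 : Tendsto (fun n : ℕ => H (n + 1 - (j n - i n)) - H n) atTop
      (nhds (Real.log (1 - (s - t)))) := tendsto_H_sub _ _ h1δ hd4
  have hmd : Tendsto (fun n : ℕ => (((n : ℝ) + 1) - ((j n - i n : ℕ) : ℝ)) / ((n : ℝ) + 1))
      atTop (nhds (1 - (s - t))) := by
    have h4 : Tendsto (fun n : ℕ => (1 : ℝ) - ((j n - i n : ℕ) : ℝ) / ((n : ℝ) + 1)) atTop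
        (nhds (1 - (s - t))) := tendsto_const_nhds.sub hd
    refine h4.congr fun n => ?_
    rw [one_sub_div (by positivity)]
  -- the closed form
  have hF : Tendsto (fun n : ℕ =>
      (((j n - i n : ℕ) : ℝ) / ((n : ℝ) + 1))
          * ((H (j n - i n) - H n) + (H (j n - i n - 1) - H n))
        + ((((n : ℝ) + 1) - ((j n - i n : ℕ) : ℝ)) / ((n : ℝ) + 1))
          * ((H (n - (j n - i n)) - H n) + (H (n + 1 - (j n - i n)) - H n))
        + (n : ℝ) / ((n : ℝ) + 1)) atTop
      (nhds ((s - t) * (Real.log (s - t) + Real.log (s - t))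
        + (1 - (s - t)) * (Real.log (1 - (s - t)) + Real.log (1 - (s - t))) + 1)) :=
    ((hd.mul (L1.add L2)).add (hmd.mul (L3.add L4))).add hn1
  have hval : (s - t) * (Real.log (s - t) + Real.log (s - t))
      + (1 - (s - t)) * (Real.log (1 - (s - t)) + Real.log (1 - (s - t))) + 1
      = 2 * ((s - t) * Real.log (s - t) + (1 - (s - t)) * Real.log (1 - (s - t))) + 1 := by
    ring
  rw [hval] at hF
  refine hF.congr' ?_
  filter_upwards [eventually_ge_atTop 1, hdev, hdn] with n hn hd1 hdn'
  have hkey := key_identity n (j n - i n) hd1 hdn'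
  rw [← hkey]
  rw [Finset.mul_sum]
  refine (Finset.sum_congr rfl fun k hk => ?_).symm
  simp only [Finset.mem_Icc] at hk
  have hk0 : (0 : ℝ) < (k : ℝ) := by
    have : 0 < k := hk.1
    exact_mod_cast this
  have hkm : (k : ℝ) < (n : ℝ) + 1 := by
    have : k < n + 1 := by omega
    exact_mod_cast this
  have h1 : (k : ℝ) ≠ 0 := hk0.ne'
  have h2 : ((n : ℝ) + 1) - (k : ℝ) ≠ 0 := by linarith
  have h3 : ((n : ℝ) + 1) ≠ 0 := by positivity
  have hc1 : (k : ℝ) + (i n : ℝ) - (j n : ℝ) = (k : ℝ) - ((j n - i n : ℕ) : ℝ) := by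
    rw [Nat.cast_sub (hij n hn)]
    ring
  have hc2 : (k : ℝ) - (i n : ℝ) + (j n : ℝ) - ((n : ℝ) + 1)
      = (k : ℝ) + ((j n - i n : ℕ) : ℝ) - ((n : ℝ) + 1) := by
    rw [Nat.cast_sub (hij n hn)]
    ring
  rw [hc1, hc2]
  set Y := max 0 ((k : ℝ) - ((j n - i n : ℕ) : ℝ))
      + max 0 ((k : ℝ) + ((j n - i n : ℕ) : ℝ) - ((n : ℝ) + 1)) with hY
  rw [div_mul_eq_mul_div, one_mul, div_mul_eq_mul_div, div_div,
    div_eq_div_iff (by positivity) (by positivity)]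
  ring
end

section
/- Fix 0 < t < s < 1. For each n ≥ 1 let i_n, j_n be integers with 1 ≤ i_n ≤ j_n ≤ n+1 such that i_n/(n+1) → t and j_n/(n+1) → s as n → ∞. For 1 ≤ k ≤ n set ψ_k^{(n)} = (n+1)⁴/(k(n+1−k))², and define κ_n = (1/(n+1)²) Σ_{k=1}^n ψ_k^{(n)} ( max(0, k + i_n − j_n) + max(0, k − i_n + j_n − (n+1)) − k²/(n+1) ). Then κ_n → 2( 2(s−t) − 1 ) ln( (s−t)/(1−(s−t)) ) − 2 as n → ∞. -/
open Filter

set_option maxHeartbeats 1000000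

open Finset Real

noncomputable def Hc (n : ℕ) : ℝ := ∑ k ∈ Finset.Icc 1 n, (1:ℝ)/k
noncomputable def Tc (n : ℕ) : ℝ := ∑ k ∈ Finset.Icc 1 n, (1:ℝ)/(k:ℝ)^2


lemma icc_split (a n : ℕ) (h : a ≤ n) (f : ℕ → ℝ) :
    ∑ k ∈ Finset.Icc 1 n, f k = ∑ k ∈ Finset.Icc 1 a, f k + ∑ k ∈ Finset.Ioc a n, f k := by
  rw [show Finset.Icc 1 n = Finset.Ioc 0 n by rw [← Finset.Icc_add_one_left_eq_Ioc]; rfl,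
    show Finset.Icc 1 a = Finset.Ioc 0 a by rw [← Finset.Icc_add_one_left_eq_Ioc]; rfl,
    Finset.sum_Ioc_consecutive _ (Nat.zero_le a) h]

lemma Hdiff (a n : ℕ) (h : a ≤ n) : ∑ k ∈ Finset.Ioc a n, (1:ℝ)/k = Hc n - Hc a := by
  rw [Hc, Hc, icc_split a n h]; ring

lemma Tdiff (a n : ℕ) (h : a ≤ n) : ∑ k ∈ Finset.Ioc a n, (1:ℝ)/(k:ℝ)^2 = Tc n - Tc a := by
  rw [Tc, Tc, icc_split a n h]; ring

lemma S2_lemma (n a : ℕ) (h2 : a ≤ n) :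
    ∑ k ∈ Finset.Icc 1 n, |(k:ℝ) - a| / k
      = 2*a*Hc a - a*Hc n + n - 2*a := by
  rw [icc_split a n h2]
  have e1 : ∑ k ∈ Finset.Icc 1 a, |(k:ℝ) - a| / k = (a:ℝ) * Hc a - a := by
    have key : ∀ k ∈ Finset.Icc 1 a, |(k:ℝ) - a| / k = (a:ℝ) * (1/k) - 1 := by
      intro k hk
      simp only [Finset.mem_Icc] at hk
      have hk0 : (0:ℝ) < k := by exact_mod_cast hk.1
      have hka : (k:ℝ) ≤ a := by exact_mod_cast hk.2
      rw [abs_of_nonpos (by linarith)]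
      field_simp
      ring
    rw [Finset.sum_congr rfl key, Finset.sum_sub_distrib, ← Finset.mul_sum,
      Finset.sum_const, Nat.card_Icc, Hc]
    simp
  have e2 : ∑ k ∈ Finset.Ioc a n, |(k:ℝ) - a| / k
      = ((n:ℝ) - a) - a * (Hc n - Hc a) := by
    have key : ∀ k ∈ Finset.Ioc a n, |(k:ℝ) - a| / k = 1 - (a:ℝ) * (1/k) := by
      intro k hk
      simp only [Finset.mem_Ioc] at hk
      have hk0 : (0:ℝ) < k := by
        have : 0 < k := lt_of_le_of_lt (Nat.zero_le a) hk.1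
        exact_mod_cast this
      have hka : (a:ℝ) ≤ k := by exact_mod_cast hk.1.le
      rw [abs_of_nonneg (by linarith)]
      field_simp
    rw [Finset.sum_congr rfl key, Finset.sum_sub_distrib, ← Finset.mul_sum,
      Hdiff a n h2, Finset.sum_const, Nat.card_Ioc]
    have : ((n - a : ℕ) : ℝ) = (n:ℝ) - a := by
      rw [Nat.cast_sub h2]
    simp [this]
  rw [e1, e2]; ring

lemma S1_lemma (n a : ℕ) (h2 : a ≤ n) :
    ∑ k ∈ Finset.Icc 1 n, |(k:ℝ) - a| / (k:ℝ)^2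
      = 2*a*Tc a - a*Tc n + Hc n - 2*Hc a := by
  rw [icc_split a n h2]
  have e1 : ∑ k ∈ Finset.Icc 1 a, |(k:ℝ) - a| / (k:ℝ)^2 = (a:ℝ) * Tc a - Hc a := by
    have key : ∀ k ∈ Finset.Icc 1 a, |(k:ℝ) - a| / (k:ℝ)^2
        = (a:ℝ) * (1/(k:ℝ)^2) - 1/k := by
      intro k hk
      simp only [Finset.mem_Icc] at hk
      have hk0 : (0:ℝ) < k := by exact_mod_cast hk.1
      have hka : (k:ℝ) ≤ a := by exact_mod_cast hk.2
      rw [abs_of_nonpos (by linarith)]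
      field_simp
      ring
    rw [Finset.sum_congr rfl key, Finset.sum_sub_distrib, ← Finset.mul_sum, Tc, Hc]
  have e2 : ∑ k ∈ Finset.Ioc a n, |(k:ℝ) - a| / (k:ℝ)^2
      = (Hc n - Hc a) - a * (Tc n - Tc a) := by
    have key : ∀ k ∈ Finset.Ioc a n, |(k:ℝ) - a| / (k:ℝ)^2
        = 1/k - (a:ℝ) * (1/(k:ℝ)^2) := by
      intro k hk
      simp only [Finset.mem_Ioc] at hk
      have hk0 : (0:ℝ) < k := by
        have : 0 < k := lt_of_le_of_lt (Nat.zero_le a) hk.1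
        exact_mod_cast this
      have hka : (a:ℝ) ≤ k := by exact_mod_cast hk.1.le
      rw [abs_of_nonneg (by linarith)]
      field_simp
    rw [Finset.sum_congr rfl key, Finset.sum_sub_distrib, ← Finset.mul_sum,
      Hdiff a n h2, Tdiff a n h2]
  rw [e1, e2]; ring

lemma reflect_sum (n : ℕ) (f : ℝ → ℝ) :
    ∑ k ∈ Finset.Icc 1 n, f (k:ℝ) = ∑ k ∈ Finset.Icc 1 n, f ((n:ℝ) + 1 - k) := by
  refine Finset.sum_nbij' (fun k => n + 1 - k) (fun k => n + 1 - k) ?_ ?_ ?_ ?_ ?_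
  · intro k hk; simp only [Finset.mem_Icc] at *; omega
  · intro k hk; simp only [Finset.mem_Icc] at *; omega
  · intro k hk; simp only [Finset.mem_Icc] at hk; omega
  · intro k hk; simp only [Finset.mem_Icc] at hk; omega
  · intro k hk
    simp only [Finset.mem_Icc] at hk
    congr 1
    have : ((n + 1 - k : ℕ) : ℝ) = (n:ℝ) + 1 - k := by
      rw [Nat.cast_sub (by omega)]; push_cast; ring
    rw [this]; ring

lemma alg_lemma (m A Ta Tn Tbb Ha Hn Hbb N : ℝ) (hm : m ≠ 0) (hnm : N = m - 1) :
    (2*A*Ta - A*Tn + Hn - 2*Ha + (2/m)*(2*A*Ha - A*Hn + N - 2*A))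
      + (2*(m-A)*Tbb - (m-A)*Tn + Hn - 2*Hbb + (2/m)*(2*(m-A)*Hbb - (m-A)*Hn + N - 2*(m-A)))
      - m*Tn
    = -2*(A*(Tn-Ta)) - 2*((m-A)*(Tn-Tbb)) + (4*A/m - 2)*(Ha-Hbb) - 4/m := by
  subst hnm
  field_simp
  ring

lemma key_identity (n a bb : ℕ) (h1 : 1 ≤ a) (h2 : a ≤ n) (hbb : bb = n + 1 - a) :
    (1/((n:ℝ)+1)^2) * ∑ k ∈ Finset.Icc 1 n,
      ((((n:ℝ)+1)^4) / ((k:ℝ) * (((n:ℝ)+1) - k))^2) *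
        (max 0 ((k:ℝ) - a) + max 0 ((k:ℝ) - (((n:ℝ)+1) - a)) - (k:ℝ)^2/((n:ℝ)+1))
    = -2*((a:ℝ) * (Tc n - Tc a)) - 2*((bb:ℝ) * (Tc n - Tc bb))
      + (4*(a:ℝ)/((n:ℝ)+1) - 2) * (Hc a - Hc bb) - 4/((n:ℝ)+1) := by
  have hbb1 : 1 ≤ bb := by omega
  have hbb2 : bb ≤ n := by omega
  set m : ℝ := (n:ℝ) + 1 with hm
  have hbbr : (bb:ℝ) = m - a := by
    subst hbb; rw [Nat.cast_sub (by omega)]; push_cast; ring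
  have hm0 : (0:ℝ) < m := by positivity
  -- pointwise identity
  have e0 : (1/m^2) * ∑ k ∈ Finset.Icc 1 n,
      ((m^4) / ((k:ℝ) * (m - k))^2) *
        (max 0 ((k:ℝ) - a) + max 0 ((k:ℝ) - (m - a)) - (k:ℝ)^2/m)
      = ∑ k ∈ Finset.Icc 1 n,
        (max 0 ((k:ℝ) - a) * (1/(k:ℝ)^2 + 2/(m*k))
          + max 0 ((k:ℝ) - a) * (1/(m-(k:ℝ))^2 + 2/(m*(m-(k:ℝ))))
          + max 0 ((k:ℝ) - (m - a)) * (1/(k:ℝ)^2 + 2/(m*k))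
          + max 0 ((k:ℝ) - (m - a)) * (1/(m-(k:ℝ))^2 + 2/(m*(m-(k:ℝ))))
          - m/(m-(k:ℝ))^2) := by
    rw [Finset.mul_sum]
    apply Finset.sum_congr rfl
    intro k hk
    simp only [Finset.mem_Icc] at hk
    have hk1 : (1:ℝ) ≤ (k:ℝ) := by exact_mod_cast hk.1
    have hk2 : (k:ℝ) ≤ (n:ℝ) := by exact_mod_cast hk.2
    have h3 : (k:ℝ) ≠ 0 := by linarith
    have h4 : m - (k:ℝ) ≠ 0 := by rw [hm]; intro h; rw [sub_eq_zero] at h; linarith [h]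
    have h5 : m ≠ 0 := ne_of_gt hm0
    field_simp
    ring
  rw [e0]
  rw [Finset.sum_sub_distrib, Finset.sum_add_distrib, Finset.sum_add_distrib,
    Finset.sum_add_distrib]
  -- reflections
  have r2 : ∑ k ∈ Finset.Icc 1 n, max 0 ((k:ℝ) - a) * (1/(m-(k:ℝ))^2 + 2/(m*(m-(k:ℝ))))
      = ∑ k ∈ Finset.Icc 1 n, max 0 ((m - (a:ℝ)) - k) * (1/(k:ℝ)^2 + 2/(m*(k:ℝ))) := by
    rw [reflect_sum n (fun x => max 0 (x - (a:ℝ)) * (1/(m-x)^2 + 2/(m*(m-x))))]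
    apply Finset.sum_congr rfl
    intro k _
    rw [show m - (k:ℝ) - (a:ℝ) = (m - (a:ℝ)) - k by ring,
      show m - (m - (k:ℝ)) = (k:ℝ) by ring]
  have r4 : ∑ k ∈ Finset.Icc 1 n, max 0 ((k:ℝ) - (m - a)) * (1/(m-(k:ℝ))^2 + 2/(m*(m-(k:ℝ))))
      = ∑ k ∈ Finset.Icc 1 n, max 0 ((a:ℝ) - k) * (1/(k:ℝ)^2 + 2/(m*(k:ℝ))) := by
    rw [reflect_sum n (fun x => max 0 (x - (m - (a:ℝ))) * (1/(m-x)^2 + 2/(m*(m-x))))]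
    apply Finset.sum_congr rfl
    intro k _
    rw [show m - (k:ℝ) - (m - (a:ℝ)) = (a:ℝ) - k by ring,
      show m - (m - (k:ℝ)) = (k:ℝ) by ring]
  have r5 : ∑ k ∈ Finset.Icc 1 n, m/(m-(k:ℝ))^2 = m * Tc n := by
    rw [show ∑ k ∈ Finset.Icc 1 n, m/(m-(k:ℝ))^2
        = ∑ k ∈ Finset.Icc 1 n, m/(k:ℝ)^2 by
      rw [reflect_sum n (fun x => m/x^2)]]
    rw [Tc, Finset.mul_sum]
    apply Finset.sum_congr rfl
    intro k _
    ring
  rw [r2, r4, r5]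
  -- combine pairs
  have c1 : ∑ k ∈ Finset.Icc 1 n, max 0 ((k:ℝ) - a) * (1/(k:ℝ)^2 + 2/(m*(k:ℝ)))
      + ∑ k ∈ Finset.Icc 1 n, max 0 ((a:ℝ) - k) * (1/(k:ℝ)^2 + 2/(m*(k:ℝ)))
      = (2*a*Tc a - a*Tc n + Hc n - 2*Hc a)
        + (2/m)*(2*a*Hc a - a*Hc n + n - 2*a) := by
    rw [← Finset.sum_add_distrib]
    rw [show ∑ k ∈ Finset.Icc 1 n,
        (max 0 ((k:ℝ) - a) * (1/(k:ℝ)^2 + 2/(m*(k:ℝ)))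
          + max 0 ((a:ℝ) - k) * (1/(k:ℝ)^2 + 2/(m*(k:ℝ))))
        = ∑ k ∈ Finset.Icc 1 n, (|(k:ℝ) - a|/(k:ℝ)^2 + (2/m)*(|(k:ℝ) - a|/k)) from ?_,
      Finset.sum_add_distrib, ← Finset.mul_sum, S1_lemma n a h2, S2_lemma n a h2]
    apply Finset.sum_congr rfl
    intro k hk
    simp only [Finset.mem_Icc] at hk
    have hk1 : (1:ℝ) ≤ (k:ℝ) := by exact_mod_cast hk.1
    have h3 : (k:ℝ) ≠ 0 := by linarith
    have h5 : m ≠ 0 := ne_of_gt hm0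
    have habs : max 0 ((k:ℝ) - a) + max 0 ((a:ℝ) - k) = |(k:ℝ) - a| := by
      rcases le_total ((k:ℝ)) a with h | h
      · rw [max_eq_left (by linarith), max_eq_right (by linarith),
          abs_of_nonpos (by linarith)]; ring
      · rw [max_eq_right (by linarith), max_eq_left (by linarith),
          abs_of_nonneg (by linarith)]
        ring
    rw [← add_mul, habs]
    field_simp
  have c2 : ∑ k ∈ Finset.Icc 1 n, max 0 ((k:ℝ) - (m - a)) * (1/(k:ℝ)^2 + 2/(m*(k:ℝ)))
      + ∑ k ∈ Finset.Icc 1 n, max 0 ((m - (a:ℝ)) - k) * (1/(k:ℝ)^2 + 2/(m*(k:ℝ)))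
      = (2*bb*Tc bb - bb*Tc n + Hc n - 2*Hc bb)
        + (2/m)*(2*bb*Hc bb - bb*Hc n + n - 2*bb) := by
    rw [← Finset.sum_add_distrib]
    rw [show ∑ k ∈ Finset.Icc 1 n,
        (max 0 ((k:ℝ) - (m - a)) * (1/(k:ℝ)^2 + 2/(m*(k:ℝ)))
          + max 0 ((m - (a:ℝ)) - k) * (1/(k:ℝ)^2 + 2/(m*(k:ℝ))))
        = ∑ k ∈ Finset.Icc 1 n, (|(k:ℝ) - bb|/(k:ℝ)^2 + (2/m)*(|(k:ℝ) - bb|/k)) from ?_,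
      Finset.sum_add_distrib, ← Finset.mul_sum, S1_lemma n bb hbb2, S2_lemma n bb hbb2]
    apply Finset.sum_congr rfl
    intro k hk
    simp only [Finset.mem_Icc] at hk
    have hk1 : (1:ℝ) ≤ (k:ℝ) := by exact_mod_cast hk.1
    have h3 : (k:ℝ) ≠ 0 := by linarith
    have h5 : m ≠ 0 := ne_of_gt hm0
    rw [show m - (a:ℝ) = (bb:ℝ) from hbbr.symm]
    have habs : max 0 ((k:ℝ) - bb) + max 0 ((bb:ℝ) - k) = |(k:ℝ) - bb| := by
      rcases le_total ((k:ℝ)) bb with h | h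
      · rw [max_eq_left (by linarith), max_eq_right (by linarith),
          abs_of_nonpos (by linarith)]; ring
      · rw [max_eq_right (by linarith), max_eq_left (by linarith),
          abs_of_nonneg (by linarith)]
        ring
    rw [← add_mul, habs]
    field_simp
  have final : ∀ X1 X2 X3 X4 Y : ℝ, X1 + X2 + X3 + X4 - Y
      = (X1 + X4) + (X3 + X2) - Y := by intros; ring
  rw [final, c1, c2]
  rw [hbbr]
  have h5 : m ≠ 0 := ne_of_gt hm0
  have hnm : (n:ℝ) = m - 1 := by rw [hm]; ring
  linear_combination alg_lemma m (a:ℝ) (Tc a) (Tc n) (Tc bb) (Hc a) (Hc n) (Hc bb) (n:ℝ) h5 hnm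

lemma tele (f : ℕ → ℝ) (a n : ℕ) (h : a ≤ n) :
    ∑ k ∈ Finset.Ioc a n, (f k - f (k+1)) = f (a+1) - f (n+1) := by
  induction n, h using Nat.le_induction with
  | base => simp
  | succ n hn ih => rw [Finset.sum_Ioc_succ_top (by omega), ih]; ring

lemma Tdiff_upper (a n : ℕ) (h1 : 1 ≤ a) (h : a ≤ n) :
    Tc n - Tc a ≤ 1/(a:ℝ) - 1/(n:ℝ) := by
  rw [← Tdiff a n h]
  have := tele (fun k => 1/((k:ℝ) - 1)) a n h
  have e1 : ((a+1:ℕ):ℝ) - 1 = (a:ℝ) := by push_cast; ring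
  have e2 : ((n+1:ℕ):ℝ) - 1 = (n:ℝ) := by push_cast; ring
  rw [e1, e2] at this
  rw [← this]
  apply Finset.sum_le_sum
  intro k hk
  simp only [Finset.mem_Ioc] at hk
  have hk2 : (2:ℝ) ≤ (k:ℝ) := by
    have : 2 ≤ k := by omega
    exact_mod_cast this
  have e3 : ((k+1:ℕ):ℝ) - 1 = (k:ℝ) := by push_cast; ring
  rw [e3]
  have e4 : 1/((k:ℝ)-1) - 1/(k:ℝ) = 1/(((k:ℝ)-1)*k) := by
    rw [div_sub_div _ _ (by linarith) (by linarith)]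
    congr 1
    ring
  rw [e4]
  apply one_div_le_one_div_of_le (by nlinarith)
  nlinarith

lemma Tdiff_lower (a n : ℕ) (h : a ≤ n) :
    1/((a:ℝ)+1) - 1/((n:ℝ)+1) ≤ Tc n - Tc a := by
  rw [← Tdiff a n h]
  have := tele (fun k => 1/(k:ℝ)) a n h
  have e1 : ((a+1:ℕ):ℝ) = (a:ℝ) + 1 := by push_cast; ring
  have e2 : ((n+1:ℕ):ℝ) = (n:ℝ) + 1 := by push_cast; ring
  rw [e1, e2] at this
  rw [← this]
  apply Finset.sum_le_sum
  intro k hk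
  simp only [Finset.mem_Ioc] at hk
  have hk1 : (1:ℝ) ≤ (k:ℝ) := by
    have : 1 ≤ k := by omega
    exact_mod_cast this
  have e3 : ((k+1:ℕ):ℝ) = (k:ℝ) + 1 := by push_cast; ring
  rw [e3]
  have e4 : 1/(k:ℝ) - 1/((k:ℝ)+1) = 1/((k:ℝ)*((k:ℝ)+1)) := by
    rw [div_sub_div _ _ (by linarith) (by linarith)]
    congr 1
    ring
  rw [e4]
  apply one_div_le_one_div_of_le (by nlinarith)
  nlinarith

lemma tendsto_nat_of_div (a : ℕ → ℕ) (c : ℝ) (hc : 0 < c)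
    (h : Tendsto (fun n : ℕ => (a n : ℝ)/((n:ℝ)+1)) atTop (nhds c)) :
    Tendsto a atTop atTop := by
  rw [← tendsto_natCast_atTop_iff (R := ℝ)]
  apply tendsto_atTop_mono' atTop (f₁ := fun n : ℕ => (c/2) * ((n:ℝ)+1))
  · have hev : ∀ᶠ n : ℕ in atTop, c/2 < (a n : ℝ)/((n:ℝ)+1) :=
      h.eventually (lt_mem_nhds (by linarith))
    filter_upwards [hev] with n hn
    have hpos : (0:ℝ) < (n:ℝ)+1 := by positivity
    rw [lt_div_iff₀ hpos] at hn
    linarith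
  · exact (tendsto_atTop_add_const_right _ 1 tendsto_natCast_atTop_atTop).const_mul_atTop
      (by linarith)

lemma L1 (a : ℕ → ℕ) (c : ℝ) (hc : 0 < c)
    (ha : ∀ᶠ n : ℕ in atTop, 1 ≤ a n ∧ a n ≤ n)
    (h : Tendsto (fun n : ℕ => (a n : ℝ)/((n:ℝ)+1)) atTop (nhds c)) :
    Tendsto (fun n : ℕ => (a n : ℝ) * (Tc n - Tc (a n))) atTop (nhds (1 - c)) := by
  have hta : Tendsto a atTop atTop := tendsto_nat_of_div a c hc h
  -- a n / n → c
  have hdivn : Tendsto (fun n : ℕ => (a n : ℝ)/(n:ℝ)) atTop (nhds c) := by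
    have h2 : Tendsto (fun n : ℕ => ((a n : ℝ)/((n:ℝ)+1)) * (((n:ℝ)+1)/(n:ℝ)))
        atTop (nhds (c * 1)) := by
      apply h.mul
      have : Tendsto (fun n : ℕ => 1 + 1/(n:ℝ)) atTop (nhds (1 + 0)) :=
        tendsto_const_nhds.add tendsto_one_div_atTop_nhds_zero_nat
      simp only [add_zero] at this
      apply this.congr'
      filter_upwards [eventually_ge_atTop 1] with n hn
      have hn0 : (n:ℝ) ≠ 0 := by
        have : 0 < n := hn
        positivity
      field_simp
    rw [mul_one] at h2
    apply h2.congr'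
    filter_upwards [eventually_ge_atTop 1] with n hn
    have hn0 : (n:ℝ) ≠ 0 := by
      have : 0 < n := hn
      positivity
    have hn1 : ((n:ℝ)+1) ≠ 0 := by positivity
    field_simp
  -- a n / (a n + 1) → 1
  have hfrac : Tendsto (fun n : ℕ => (a n : ℝ)/((a n : ℝ)+1)) atTop (nhds 1) := by
    have g1 : Tendsto (fun k : ℕ => (k:ℝ)/((k:ℝ)+1)) atTop (nhds 1) := by
      have : Tendsto (fun k : ℕ => 1 - 1/((k:ℝ)+1)) atTop (nhds (1 - 0)) :=
        tendsto_const_nhds.sub tendsto_one_div_add_atTop_nhds_zero_nat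
      simp only [sub_zero] at this
      apply this.congr
      intro k
      have : ((k:ℝ)+1) ≠ 0 := by positivity
      field_simp
      ring
    exact g1.comp hta
  apply tendsto_of_tendsto_of_tendsto_of_le_of_le'
    (g := fun n : ℕ => (a n : ℝ)/((a n : ℝ)+1) - (a n : ℝ)/((n:ℝ)+1))
    (h := fun n : ℕ => 1 - (a n : ℝ)/(n:ℝ))
  · exact hfrac.sub h
  · exact tendsto_const_nhds.sub hdivn
  · filter_upwards [ha] with n hn
    have h1 : 1 ≤ a n := hn.1
    have h2 : a n ≤ n := hn.2
    have hA : (0:ℝ) < (a n : ℝ) := by exact_mod_cast h1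
    have := Tdiff_lower (a n) n h2
    calc (a n : ℝ)/((a n : ℝ)+1) - (a n : ℝ)/((n:ℝ)+1)
        = (a n : ℝ) * (1/((a n : ℝ)+1) - 1/((n:ℝ)+1)) := by
          rw [mul_sub, mul_one_div, mul_one_div]
      _ ≤ (a n : ℝ) * (Tc n - Tc (a n)) := by
          apply mul_le_mul_of_nonneg_left this hA.le
  · filter_upwards [ha] with n hn
    have h1 : 1 ≤ a n := hn.1
    have h2 : a n ≤ n := hn.2
    have hA : (0:ℝ) < (a n : ℝ) := by exact_mod_cast h1
    have hN : (0:ℝ) < (n:ℝ) := by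
      have : 1 ≤ n := le_trans h1 h2
      exact_mod_cast this
    have := Tdiff_upper (a n) n h1 h2
    calc (a n : ℝ) * (Tc n - Tc (a n))
        ≤ (a n : ℝ) * (1/(a n : ℝ) - 1/(n:ℝ)) := mul_le_mul_of_nonneg_left this hA.le
      _ = 1 - (a n : ℝ)/(n:ℝ) := by field_simp

lemma Hc_eq_harmonic (n : ℕ) : Hc n = (harmonic n : ℝ) := by
  induction n with
  | zero => simp [Hc, harmonic]
  | succ n ih =>
    rw [Hc, Finset.sum_Icc_succ_top (by omega), ← Hc, ih, harmonic_succ]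
    push_cast
    ring

lemma L2 (a b : ℕ → ℕ) (c d : ℝ) (hc : 0 < c) (hd : 0 < d)
    (hta : Tendsto a atTop atTop) (htb : Tendsto b atTop atTop)
    (ha : Tendsto (fun n : ℕ => (a n : ℝ)/((n:ℝ)+1)) atTop (nhds c))
    (hb : Tendsto (fun n : ℕ => (b n : ℝ)/((n:ℝ)+1)) atTop (nhds d)) :
    Tendsto (fun n : ℕ => Hc (a n) - Hc (b n)) atTop
      (nhds (Real.log c - Real.log d)) := by
  have hE : Tendsto (fun k : ℕ => Hc k - Real.log k) atTop
      (nhds Real.eulerMascheroniConstant) := by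
    apply Real.tendsto_harmonic_sub_log.congr
    intro k
    rw [Hc_eq_harmonic]
  have hEa := hE.comp hta
  have hEb := hE.comp htb
  -- log (a n) - log (b n) → log c - log d
  have hla : Tendsto (fun n : ℕ => Real.log ((a n : ℝ)/((n:ℝ)+1))) atTop (nhds (Real.log c)) :=
    (Real.continuousAt_log hc.ne').tendsto.comp ha
  have hlb : Tendsto (fun n : ℕ => Real.log ((b n : ℝ)/((n:ℝ)+1))) atTop (nhds (Real.log d)) :=
    (Real.continuousAt_log hd.ne').tendsto.comp hb
  have hlog : Tendsto (fun n : ℕ => Real.log (a n : ℝ) - Real.log (b n : ℝ)) atTop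
      (nhds (Real.log c - Real.log d)) := by
    apply (hla.sub hlb).congr'
    filter_upwards [hta.eventually (eventually_ge_atTop 1),
      htb.eventually (eventually_ge_atTop 1)] with n h1 h2
    have ha0 : (a n : ℝ) ≠ 0 := by
      have : (0:ℕ) < a n := h1
      positivity
    have hb0 : (b n : ℝ) ≠ 0 := by
      have : (0:ℕ) < b n := h2
      positivity
    have hm0 : ((n:ℝ)+1) ≠ 0 := by positivity
    rw [Real.log_div ha0 hm0, Real.log_div hb0 hm0]
    ring
  have := (hEa.sub hEb).add hlog
  rw [sub_self, zero_add] at this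
  apply this.congr
  intro n
  simp only [Function.comp]
  ring


/-- Fix `0 < t < s < 1` and sequences `1 ≤ i_n ≤ j_n ≤ n+1` (for
`n ≥ 1`) with `i_n/(n+1) → t`, `j_n/(n+1) → s`. With weights
`ψ_k = (n+1)⁴/(k(n+1−k))²` (the circularized `R̃_n²` weights
`ψ_k = 1/(μ_k(1−μ_k))²`, `μ_k = k/(n+1)`), the kernel-matrix entries
`κ_n = (1/(n+1)²) Σ_{k=1}^n ψ_k (max(0, k+i_n−j_n) + max(0, k−i_n+j_n−(n+1)) − k²/(n+1))`
converge to `2(2(s−t) − 1) ln((s−t)/(1−(s−t))) − 2`. -/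
theorem kernel_limit_Rn_circularized
    (t s : ℝ) (ht : 0 < t) (hts : t < s) (hs : s < 1)
    (i j : ℕ → ℕ)
    (hi1 : ∀ n, 1 ≤ n → 1 ≤ i n) (hij : ∀ n, 1 ≤ n → i n ≤ j n)
    (hjn : ∀ n, 1 ≤ n → j n ≤ n + 1)
    (hit : Tendsto (fun n : ℕ => (i n : ℝ) / ((n : ℝ) + 1)) atTop (nhds t))
    (hjs : Tendsto (fun n : ℕ => (j n : ℝ) / ((n : ℝ) + 1)) atTop (nhds s)) :
    Tendsto (fun n : ℕ =>
        (1 / ((n : ℝ) + 1) ^ 2) *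
          ∑ k ∈ Finset.Icc 1 n,
            (((n : ℝ) + 1) ^ 4 / ((k : ℝ) * (((n : ℝ) + 1) - (k : ℝ))) ^ 2) *
              (max 0 ((k : ℝ) + (i n : ℝ) - (j n : ℝ))
                + max 0 ((k : ℝ) - (i n : ℝ) + (j n : ℝ) - ((n : ℝ) + 1))
                - (k : ℝ) ^ 2 / ((n : ℝ) + 1)))
      atTop
      (nhds (2 * (2 * (s - t) - 1) * Real.log ((s - t) / (1 - (s - t))) - 2)) := by
  set d : ℝ := s - t with hdd
  have hd : 0 < d := sub_pos.mpr hts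
  have hd1 : d < 1 := by rw [hdd]; linarith
  set a : ℕ → ℕ := fun n => j n - i n with haa
  set b : ℕ → ℕ := fun n => n + 1 - a n with hbb
  -- a n / (n+1) → d
  have h_a_div : Tendsto (fun n : ℕ => (a n : ℝ)/((n:ℝ)+1)) atTop (nhds d) := by
    apply (hjs.sub hit).congr'
    filter_upwards [eventually_ge_atTop 1] with n hn
    rw [haa]
    dsimp only
    rw [Nat.cast_sub (hij n hn), sub_div]
  -- eventually 1 ≤ n, 1 ≤ a n ≤ n
  have ev : ∀ᶠ n : ℕ in atTop, 1 ≤ n ∧ 1 ≤ a n ∧ a n ≤ n := by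
    have hlow := h_a_div.eventually (lt_mem_nhds (show d/2 < d by linarith))
    have hhigh := h_a_div.eventually (gt_mem_nhds (show d < (d+1)/2 by linarith))
    filter_upwards [hlow, hhigh, eventually_ge_atTop 1] with n h1 h2 hn
    have hp : (0:ℝ) < (n:ℝ)+1 := by positivity
    have h1' : d/2*((n:ℝ)+1) < (a n : ℝ) := (lt_div_iff₀ hp).mp h1
    have h2' : (a n : ℝ) < (d+1)/2*((n:ℝ)+1) := (div_lt_iff₀ hp).mp h2
    refine ⟨hn, ?_, ?_⟩
    · have : (0:ℝ) < (a n : ℝ) := by nlinarith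
      have : 0 < a n := by exact_mod_cast this
      omega
    · have : (a n : ℝ) < (n:ℝ)+1 := by nlinarith
      have : (a n : ℝ) < ((n+1:ℕ):ℝ) := by push_cast; linarith
      have : a n < n + 1 := by exact_mod_cast this
      omega
  have ev_b : ∀ᶠ n : ℕ in atTop, 1 ≤ b n ∧ b n ≤ n := by
    filter_upwards [ev] with n hn
    rw [hbb]
    dsimp only
    omega
  -- b n / (n+1) → 1 - d
  have h_b_div : Tendsto (fun n : ℕ => (b n : ℝ)/((n:ℝ)+1)) atTop (nhds (1 - d)) := by
    apply (tendsto_const_nhds.sub h_a_div).congr'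
    filter_upwards [ev] with n hn
    have hp : ((n:ℝ)+1) ≠ 0 := by positivity
    have hcast : (b n : ℝ) = ((n:ℝ)+1) - (a n : ℝ) := by
      rw [hbb]
      dsimp only
      rw [Nat.cast_sub (by omega)]
      push_cast
      ring
    rw [hcast]
    field_simp
  have hta : Tendsto a atTop atTop := tendsto_nat_of_div a d hd h_a_div
  have htb : Tendsto b atTop atTop := tendsto_nat_of_div b (1-d) (by linarith) h_b_div
  have hT1 := L1 a d hd (ev.mono fun n h => ⟨h.2.1, h.2.2⟩) h_a_div
  have hT2 := L1 b (1-d) (by linarith) ev_b h_b_div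
  have hH := L2 a b d (1-d) hd (by linarith) hta htb h_a_div h_b_div
  have hcoef : Tendsto (fun n : ℕ => 4*(a n : ℝ)/((n:ℝ)+1) - 2) atTop (nhds (4*d - 2)) := by
    have := (h_a_div.const_mul 4).sub (tendsto_const_nhds (x := (2:ℝ)))
    apply this.congr
    intro n
    ring
  have h4m : Tendsto (fun n : ℕ => 4/((n:ℝ)+1)) atTop (nhds 0) :=
    Tendsto.div_atTop tendsto_const_nhds
      (tendsto_atTop_add_const_right _ 1 tendsto_natCast_atTop_atTop)
  have hF : Tendsto (fun n : ℕ =>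
      -2*((a n : ℝ) * (Tc n - Tc (a n))) - 2*((b n : ℝ) * (Tc n - Tc (b n)))
        + (4*(a n : ℝ)/((n:ℝ)+1) - 2) * (Hc (a n) - Hc (b n)) - 4/((n:ℝ)+1))
      atTop (nhds (-2*(1-d) - 2*(1-(1-d)) + (4*d-2)*(Real.log d - Real.log (1-d)) - 0)) :=
    (((hT1.const_mul (-2)).sub (hT2.const_mul 2)).add (hcoef.mul hH)).sub h4m
  have hpoint : (-2*(1-d) - 2*(1-(1-d)) + (4*d-2)*(Real.log d - Real.log (1-d)) - 0)
      = 2 * (2 * d - 1) * Real.log (d / (1 - d)) - 2 := by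
    rw [Real.log_div hd.ne' (by linarith : (1:ℝ)-d ≠ 0)]
    ring
  rw [hpoint] at hF
  apply hF.congr'
  filter_upwards [ev] with n hn
  obtain ⟨hn1, ha1, ha2⟩ := hn
  rw [← key_identity n (a n) (b n) ha1 ha2 (by rw [hbb])]
  congr 1
  apply Finset.sum_congr rfl
  intro k _
  have e1 : (k:ℝ) - ((a n : ℕ):ℝ) = (k : ℝ) + (i n : ℝ) - (j n : ℝ) := by
    rw [haa]
    dsimp only
    rw [Nat.cast_sub (hij n hn1)]
    ring
  have e2 : (k:ℝ) - (((n:ℝ)+1) - ((a n : ℕ):ℝ))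
      = (k : ℝ) - (i n : ℝ) + (j n : ℝ) - ((n:ℝ)+1) := by
    rw [haa]
    dsimp only
    rw [Nat.cast_sub (hij n hn1)]
    ring
  rw [e1, e2]
end
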